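/- In the right-angled Coxeter group W with generators s_1,…,s_{2n}, relations s_j^2 = 1 for all j and (s_i s_j)^2 = 1 for all i < j with j ≠ i + n, the commutator subgroup [W,W] is abelian. -/

import Mathlib

/-- Relators of the right-angled Coxeter group associated to the fan of an
`n`-step Bott tower: `s_j ^ 2` for all `j`, and `(s_i s_j) ^ 2` for all
`i < j` with `j ≠ i + n`. -/
def coxeterRels (n : ℕ) : Set (FreeGroup (Fin (2 * n))) :=
  {w | (∃ j : Fin (2 * n), w = (FreeGroup.of j) ^ 2) ∨
    (∃ i j : Fin (2 * n), i < j ∧ j.val ≠ i.val + n ∧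
      w = (FreeGroup.of i * FreeGroup.of j) ^ 2)}

namespace CoxAux

open scoped commutatorElement

variable {n : ℕ}

abbrev G (n : ℕ) := PresentedGroup (coxeterRels n)

noncomputable def t (n : ℕ) (j : Fin (2 * n)) : G n := PresentedGroup.of j

lemma rel_one {r : FreeGroup (Fin (2 * n))} (hr : r ∈ coxeterRels n) :
    PresentedGroup.mk (coxeterRels n) r = 1 :=
  (QuotientGroup.eq_one_iff _).2 (Subgroup.subset_normalClosure hr)

lemma sq (j : Fin (2 * n)) : t n j * t n j = 1 := by
  have h := rel_one (n := n) (Or.inl ⟨j, rfl⟩)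
  rw [map_pow] at h
  simpa [t, PresentedGroup.of, pow_two] using h

lemma inv_t (j : Fin (2 * n)) : (t n j)⁻¹ = t n j :=
  inv_eq_of_mul_eq_one_right (sq j)

lemma comm_of_lt {i j : Fin (2 * n)} (hij : i < j) (h : j.val ≠ i.val + n) :
    t n i * t n j = t n j * t n i := by
  have h1 := rel_one (n := n) (Or.inr ⟨i, j, hij, h, rfl⟩)
  rw [map_pow, map_mul] at h1
  have h2 : (t n i * t n j) * (t n i * t n j) = 1 := by
    simpa [t, PresentedGroup.of, pow_two] using h1
  have h3 : t n i * t n j = (t n i * t n j)⁻¹ := (inv_eq_of_mul_eq_one_right h2).symm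
  rw [h3, mul_inv_rev, inv_t, inv_t]

lemma tcomm {i j : Fin (2 * n)} (h1 : j.val ≠ i.val + n) (h2 : i.val ≠ j.val + n) :
    Commute (t n i) (t n j) := by
  rcases lt_trichotomy i j with h | h | h
  · exact comm_of_lt h h1
  · rw [h]
  · exact (comm_of_lt h h2).symm

/-- first-half embedding -/
def e1 (n : ℕ) (i : Fin n) : Fin (2 * n) := ⟨i.val, by omega⟩
/-- second-half embedding -/
def e2 (n : ℕ) (i : Fin n) : Fin (2 * n) := ⟨i.val + n, by omega⟩

/-- The generators of the commutator subgroup. -/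
noncomputable def c (n : ℕ) (i : Fin n) : G n :=
  t n (e1 n i) * t n (e2 n i) * t n (e1 n i) * t n (e2 n i)

/-- The subgroup generated by the `c i`. -/
noncomputable def A (n : ℕ) : Subgroup (G n) := Subgroup.closure (Set.range (c n))

lemma c_mem (i : Fin n) : c n i ∈ A n :=
  Subgroup.subset_closure ⟨i, rfl⟩

lemma c_inv (i : Fin n) : (c n i)⁻¹ =
    t n (e2 n i) * t n (e1 n i) * t n (e2 n i) * t n (e1 n i) := by
  simp only [c, mul_inv_rev, inv_t]; group

lemma ccomm (i j : Fin n) : Commute (c n i) (c n j) := by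
  rcases eq_or_ne i j with h | h
  · rw [h]
  · have hij : i.val ≠ j.val := fun hv => h (Fin.ext hv)
    have h11 : Commute (t n (e1 n i)) (t n (e1 n j)) := tcomm (by simp [e1]; omega) (by simp [e1]; omega)
    have h12 : Commute (t n (e1 n i)) (t n (e2 n j)) := tcomm (by simp [e1, e2]; omega) (by simp [e1, e2]; omega)
    have h21 : Commute (t n (e2 n i)) (t n (e1 n j)) := tcomm (by simp [e1, e2]; omega) (by simp [e1, e2]; omega)
    have h22 : Commute (t n (e2 n i)) (t n (e2 n j)) := tcomm (by simp [e2]; omega) (by simp [e2]; omega)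
    have k1 : Commute (c n i) (t n (e1 n j)) :=
      ((h11.mul_left h21).mul_left h11).mul_left h21
    have k2 : Commute (c n i) (t n (e2 n j)) :=
      ((h12.mul_left h22).mul_left h12).mul_left h22
    exact ((k1.mul_right k2).mul_right k1).mul_right k2

lemma conj_c (j : Fin (2 * n)) (i : Fin n) : t n j * c n i * (t n j)⁻¹ ∈ A n := by
  rw [inv_t]
  by_cases h1 : j.val = i.val
  · have hj : j = e1 n i := Fin.ext h1
    rw [hj]
    have key : t n (e1 n i) * c n i * t n (e1 n i) = (c n i)⁻¹ := by
      rw [c_inv]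
      unfold c
      have e : t n (e1 n i) * (t n (e1 n i) * t n (e2 n i) * t n (e1 n i) * t n (e2 n i)) *
            t n (e1 n i)
          = (t n (e1 n i) * t n (e1 n i)) *
            (t n (e2 n i) * (t n (e1 n i) * (t n (e2 n i) * t n (e1 n i)))) := by group
      rw [e, sq, one_mul]
      group
    rw [key]; exact inv_mem (c_mem i)
  · by_cases h2 : j.val = i.val + n
    · have hj : j = e2 n i := Fin.ext h2
      rw [hj]
      have key : t n (e2 n i) * c n i * t n (e2 n i) = (c n i)⁻¹ := by
        rw [c_inv]
        unfold c
        have e : t n (e2 n i) * (t n (e1 n i) * t n (e2 n i) * t n (e1 n i) * t n (e2 n i)) *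
              t n (e2 n i)
            = (t n (e2 n i) * (t n (e1 n i) * (t n (e2 n i) * t n (e1 n i)))) *
              (t n (e2 n i) * t n (e2 n i)) := by group
        rw [e, sq, mul_one]
        group
      rw [key]; exact inv_mem (c_mem i)
    · have ca : Commute (t n j) (t n (e1 n i)) :=
        tcomm (by simp [e1]; omega) (by simp [e1]; omega)
      have cb : Commute (t n j) (t n (e2 n i)) :=
        tcomm (by simp [e2]; omega) (by simp [e2]; omega)
      have cw : Commute (t n j) (c n i) := ((ca.mul_right cb).mul_right ca).mul_right cb
      rw [cw.eq, mul_assoc, sq, mul_one]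
      exact c_mem i

lemma conj_gen_mem (j : Fin (2 * n)) {a : G n} (ha : a ∈ A n) :
    t n j * a * (t n j)⁻¹ ∈ A n := by
  induction ha using Subgroup.closure_induction with
  | mem x hx => obtain ⟨i, rfl⟩ := hx; exact conj_c j i
  | one => simpa using (A n).one_mem
  | mul x y hx hy ihx ihy =>
      have e : t n j * (x * y) * (t n j)⁻¹
          = (t n j * x * (t n j)⁻¹) * (t n j * y * (t n j)⁻¹) := by group
      rw [e]; exact mul_mem ihx ihy
  | inv x hx ihx =>
      have e : t n j * x⁻¹ * (t n j)⁻¹ = (t n j * x * (t n j)⁻¹)⁻¹ := by group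
      rw [e]; exact inv_mem ihx

lemma conj_mem (g : G n) {a : G n} (ha : a ∈ A n) : g * a * g⁻¹ ∈ A n := by
  have hg : g ∈ Subgroup.closure
      (Set.range (PresentedGroup.of : Fin (2 * n) → G n)) := by
    rw [PresentedGroup.closure_range_of]; exact Subgroup.mem_top g
  have key : ∀ b ∈ A n, g * b * g⁻¹ ∈ A n ∧ g⁻¹ * b * g ∈ A n := by
    induction hg using Subgroup.closure_induction with
    | mem x hx =>
        obtain ⟨j, rfl⟩ := hx
        intro b hb
        have h1 : t n j * b * (t n j)⁻¹ ∈ A n := conj_gen_mem j hb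
        refine ⟨h1, ?_⟩
        rw [show (PresentedGroup.of j : G n) = t n j from rfl, inv_t]
        rwa [inv_t] at h1
    | one => intro b hb; exact ⟨by simpa using hb, by simpa using hb⟩
    | mul x y hx hy ihx ihy =>
        intro b hb
        constructor
        · have h3 := (ihx _ ((ihy b hb).1)).1
          have e : x * (y * b * y⁻¹) * x⁻¹ = (x * y) * b * (x * y)⁻¹ := by group
          rwa [e] at h3
        · have h3 := (ihy _ ((ihx b hb).2)).2
          have e : y⁻¹ * (x⁻¹ * b * x) * y = (x * y)⁻¹ * b * (x * y) := by group
          rwa [e] at h3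
    | inv x hx ihx =>
        intro b hb
        constructor
        · have h3 := (ihx b hb).2
          rwa [show x⁻¹ * b * x = x⁻¹ * b * (x⁻¹)⁻¹ by rw [inv_inv]] at h3
        · have h3 := (ihx b hb).1
          rwa [show x * b * x⁻¹ = (x⁻¹)⁻¹ * b * x⁻¹ by rw [inv_inv]] at h3
  exact (key a ha).1

lemma comm_gen (i j : Fin (2 * n)) : ⁅t n i, t n j⁆ ∈ A n := by
  rw [commutatorElement_def, inv_t, inv_t]
  by_cases h1 : j.val = i.val + n
  · have hi : i.val < n := by have := j.isLt; omega
    have hi' : i = e1 n ⟨i.val, hi⟩ := Fin.ext rfl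
    have hj' : j = e2 n ⟨i.val, hi⟩ := Fin.ext h1
    rw [hi', hj']
    exact c_mem _
  · by_cases h2 : i.val = j.val + n
    · have hj : j.val < n := by have := i.isLt; omega
      have hi' : i = e2 n ⟨j.val, hj⟩ := Fin.ext h2
      have hj' : j = e1 n ⟨j.val, hj⟩ := Fin.ext rfl
      have key : t n i * t n j * t n i * t n j = (c n ⟨j.val, hj⟩)⁻¹ := by
        rw [c_inv, ← hi', ← hj']
      rw [key]
      exact inv_mem (c_mem _)
    · have hc := (tcomm h1 h2).eq
      have e : t n i * t n j * t n i * t n j = 1 := by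
        rw [hc, mul_assoc (t n j), sq, mul_one, sq]
      rw [e]; exact one_mem _

lemma comm_gen_all (j : Fin (2 * n)) (h : G n) : ⁅t n j, h⁆ ∈ A n := by
  have hh : h ∈ Subgroup.closure
      (Set.range (PresentedGroup.of : Fin (2 * n) → G n)) := by
    rw [PresentedGroup.closure_range_of]; exact Subgroup.mem_top h
  induction hh using Subgroup.closure_induction with
  | mem x hx => obtain ⟨k, rfl⟩ := hx; exact comm_gen j k
  | one => simpa using (A n).one_mem
  | mul x y hx hy ihx ihy =>
      have e : ⁅t n j, x * y⁆ = ⁅t n j, x⁆ * (x * ⁅t n j, y⁆ * x⁻¹) := by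
        simp only [commutatorElement_def]; group
      rw [e]; exact mul_mem ihx (conj_mem x ihy)
  | inv x hx ihx =>
      have e : ⁅t n j, x⁻¹⁆ = x⁻¹ * ⁅t n j, x⁆⁻¹ * (x⁻¹)⁻¹ := by
        simp only [commutatorElement_def]; group
      rw [e]; exact conj_mem x⁻¹ (inv_mem ihx)

lemma comm_all (g h : G n) : ⁅g, h⁆ ∈ A n := by
  have hg : g ∈ Subgroup.closure
      (Set.range (PresentedGroup.of : Fin (2 * n) → G n)) := by
    rw [PresentedGroup.closure_range_of]; exact Subgroup.mem_top g
  induction hg using Subgroup.closure_induction with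
  | mem x hx => obtain ⟨j, rfl⟩ := hx; exact comm_gen_all j h
  | one => simpa using (A n).one_mem
  | mul x y hx hy ihx ihy =>
      have e : ⁅x * y, h⁆ = (x * ⁅y, h⁆ * x⁻¹) * ⁅x, h⁆ := by
        simp only [commutatorElement_def]; group
      rw [e]; exact mul_mem (conj_mem x ihy) ihx
  | inv x hx ihx =>
      have e : ⁅x⁻¹, h⁆ = x⁻¹ * ⁅x, h⁆⁻¹ * (x⁻¹)⁻¹ := by
        simp only [commutatorElement_def]; group
      rw [e]; exact conj_mem x⁻¹ (inv_mem ihx)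

lemma commutator_le_A : commutator (G n) ≤ A n := by
  rw [commutator_def, Subgroup.commutator_le]
  intro g _ h _
  exact comm_all g h

lemma c_comm_A (i : Fin n) {b : G n} (hb : b ∈ A n) : Commute (c n i) b := by
  induction hb using Subgroup.closure_induction with
  | mem y hy => obtain ⟨j, rfl⟩ := hy; exact ccomm i j
  | one => exact Commute.one_right _
  | mul x y _ _ ihx ihy => exact ihx.mul_right ihy
  | inv x _ ihx => exact ihx.inv_right

lemma A_comm {a b : G n} (ha : a ∈ A n) (hb : b ∈ A n) : Commute a b := by
  induction ha using Subgroup.closure_induction with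
  | mem x hx => obtain ⟨i, rfl⟩ := hx; exact c_comm_A i hb
  | one => exact Commute.one_left _
  | mul x y _ _ ihx ihy => exact ihx.mul_left ihy
  | inv x _ ihx => exact ihx.inv_left

end CoxAux

theorem stmt_1 (n : ℕ) (x y : PresentedGroup (coxeterRels n))
    (hx : x ∈ commutator (PresentedGroup (coxeterRels n)))
    (hy : y ∈ commutator (PresentedGroup (coxeterRels n))) :
    x * y = y * x :=
  (CoxAux.A_comm (CoxAux.commutator_le_A hx) (CoxAux.commutator_le_A hy)).eq
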